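/- Let q ≥ 2 and L ≥ 2, and let α(C(q,L)) denote the independence number of the layered chain graph C(q,L). If L = 2a then α(C(q,L)) = q^{2a−1} − q^a + 1, and if L = 2a+1 then α(C(q,L)) = q^{2a} − q^a. Consequently, the minimum size of a vertex cover of C(q,L) equals q^a − 2 when L = 2a and q^a − 1 when L = 2a+1. -/

import Mathlib

/-- Vertex type of the layered chain graph `C(q,L)`: a vertex is a pair `(k, j)`
where `k` is its layer (`1 ≤ k ≤ L-1`) and `j` indexes the `(q-1)·q^(L-k-1)`
vertices of layer `V_k`. -/
abbrev ChainVert (q L : ℕ) :=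
  {v : ℕ × ℕ // 1 ≤ v.1 ∧ v.1 ≤ L - 1 ∧ v.2 < (q - 1) * q ^ (L - v.1 - 1)}

/-- The layered chain graph `C(q,L)`: distinct vertices in layers `k` and `ℓ`
are adjacent iff `k + ℓ ≥ L`. -/
def chainGraph (q L : ℕ) : SimpleGraph (ChainVert q L) where
  Adj x y := x ≠ y ∧ L ≤ x.val.1 + y.val.1
  symm := ⟨by
    rintro x y ⟨h1, h2⟩
    exact ⟨h1.symm, by omega⟩⟩
  loopless := ⟨fun x h => h.1 rfl⟩

/-- An independent set of a graph: no two distinct members are adjacent. -/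
def IsIndepSet' {V : Type*} (G : SimpleGraph V) (s : Set V) : Prop :=
  ∀ ⦃x⦄, x ∈ s → ∀ ⦃y⦄, y ∈ s → x ≠ y → ¬ G.Adj x y

/-- A vertex cover of a graph: a set of vertices meeting every edge. -/
def IsVertexCover {V : Type*} (G : SimpleGraph V) (s : Set V) : Prop :=
  ∀ ⦃x y⦄, G.Adj x y → x ∈ s ∨ y ∈ s

namespace ChainAux

instance instFin (q L : ℕ) : Finite (ChainVert q L) := by
  have h : {v : ℕ × ℕ | 1 ≤ v.1 ∧ v.1 ≤ L - 1 ∧ v.2 < (q - 1) * q ^ (L - v.1 - 1)} ⊆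
      Set.Iic L ×ˢ Set.Iio ((q - 1) * (q + 1) ^ L + 1) := by
    rintro ⟨k, j⟩ ⟨h1, h2, h3⟩
    have hle : q ^ (L - k - 1) ≤ (q + 1) ^ L :=
      le_trans (Nat.pow_le_pow_left (by omega) _) (Nat.pow_le_pow_right (by omega) (by omega))
    exact ⟨by simpa using by omega, by
      simp only [Set.mem_Iio]
      calc j < (q - 1) * q ^ (L - k - 1) := h3
        _ ≤ (q - 1) * (q + 1) ^ L := Nat.mul_le_mul_left _ hle
        _ < _ := by omega⟩
  exact (Set.Finite.subset ((Set.finite_Iic _).prod (Set.finite_Iio _)) h).to_subtype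

variable {q L : ℕ}

/-- flattening map -/
def F (q L : ℕ) (v : ChainVert q L) : ℕ := v.1.2 + q ^ (L - v.1.1 - 1) - 1

lemma F_add_one (hq : 2 ≤ q) (v : ChainVert q L) :
    F q L v + 1 = v.1.2 + q ^ (L - v.1.1 - 1) := by
  have : 1 ≤ q ^ (L - v.1.1 - 1) := Nat.one_le_pow _ _ (by omega)
  unfold F; omega

lemma F_lb (hq : 2 ≤ q) (v : ChainVert q L) : q ^ (L - v.1.1 - 1) ≤ F q L v + 1 := by
  rw [F_add_one hq]; omega

lemma F_ub (hq : 2 ≤ q) (v : ChainVert q L) : F q L v + 1 < q ^ (L - v.1.1) := by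
  obtain ⟨h1, h2, h3⟩ := v.2
  rw [F_add_one hq]
  have he : L - v.1.1 = (L - v.1.1 - 1) + 1 := by omega
  conv_rhs => rw [he]
  have hsum : (q - 1) * q ^ (L - v.1.1 - 1) + q ^ (L - v.1.1 - 1)
      = q ^ (L - v.1.1 - 1 + 1) := by
    have h4 : q - 1 + 1 = q := by omega
    calc (q - 1) * q ^ (L - v.1.1 - 1) + q ^ (L - v.1.1 - 1)
        = (q - 1 + 1) * q ^ (L - v.1.1 - 1) := by ring
      _ = q ^ (L - v.1.1 - 1 + 1) := by rw [h4, pow_succ]; ring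
  omega

lemma log_F (hq : 2 ≤ q) (v : ChainVert q L) :
    Nat.log q (F q L v + 1) = L - v.1.1 - 1 := by
  refine Nat.log_eq_of_pow_le_of_lt_pow (F_lb hq v) ?_
  have h2 := v.2.2.1
  have h1 := v.2.1
  have : L - v.1.1 - 1 + 1 = L - v.1.1 := by omega
  rw [this]; exact F_ub hq v

lemma F_inj (hq : 2 ≤ q) : Function.Injective (F q L) := by
  intro v w h
  have hv := log_F hq v
  have hw := log_F hq w
  rw [h] at hv
  have hk : v.1.1 = w.1.1 := by
    have := v.2.1; have := v.2.2.1; have := w.2.1; have := w.2.2.1; omega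
  have hj : v.1.2 = w.1.2 := by
    have h1 := F_add_one hq v
    have h2 := F_add_one hq w
    rw [h] at h1; rw [hk] at h1; omega
  exact Subtype.ext (Prod.ext hk hj)

lemma F_lt (hq : 2 ≤ q) (hL : 2 ≤ L) (v : ChainVert q L) : F q L v < q ^ (L - 1) - 1 := by
  have h1 := F_ub hq v
  have h2 : q ^ (L - v.1.1) ≤ q ^ (L - 1) := Nat.pow_le_pow_right (by omega) (by have := v.2.1; omega)
  omega

lemma layer_le_iff (hq : 2 ≤ q) (v : ChainVert q L) (t : ℕ) :
    v.1.1 ≤ t ↔ q ^ (L - 1 - t) ≤ F q L v + 1 := by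
  constructor
  · intro h
    refine le_trans (Nat.pow_le_pow_right (by omega) (by omega)) (F_lb hq v)
  · intro h
    by_contra hc
    push_neg at hc
    have h2 : q ^ (L - v.1.1) ≤ q ^ (L - 1 - t) :=
      Nat.pow_le_pow_right (by omega) (by have := v.2.2.1; omega)
    have := F_ub hq v
    omega

lemma F_surj (hq : 2 ≤ q) (hL : 2 ≤ L) {n : ℕ} (hn : n < q ^ (L - 1) - 1) :
    ∃ v : ChainVert q L, F q L v = n := by
  set e := Nat.log q (n + 1) with he
  have hp1 : q ^ e ≤ n + 1 := Nat.pow_log_le_self q (by omega)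
  have hp2 : n + 1 < q ^ (e + 1) := Nat.lt_pow_succ_log_self (by omega) _
  have heL : e < L - 1 := Nat.log_lt_of_lt_pow (by omega) (by omega)
  have hk1 : 1 ≤ L - 1 - e := by omega
  have hkL : L - 1 - e ≤ L - 1 := by omega
  have hexp : L - (L - 1 - e) - 1 = e := by omega
  have hj : n + 1 - q ^ e < (q - 1) * q ^ (L - (L - 1 - e) - 1) := by
    rw [hexp]
    have hq1 : (q - 1) * q ^ e + q ^ e = q ^ (e + 1) := by
      have h4 : q - 1 + 1 = q := by omega
      calc (q - 1) * q ^ e + q ^ e = (q - 1 + 1) * q ^ e := by ring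
        _ = q ^ (e + 1) := by rw [h4, pow_succ]; ring
    omega
  refine ⟨⟨(L - 1 - e, n + 1 - q ^ e), hk1, hkL, hj⟩, ?_⟩
  show n + 1 - q ^ e + q ^ (L - (L - 1 - e) - 1) - 1 = n
  rw [hexp]; omega

lemma card_layer_le (hq : 2 ≤ q) (hL : 2 ≤ L) (t : ℕ) :
    {v : ChainVert q L | v.1.1 ≤ t}.ncard = q ^ (L - 1) - q ^ (L - 1 - t) := by
  have himg : F q L '' {v : ChainVert q L | v.1.1 ≤ t}
      = Set.Ico (q ^ (L - 1 - t) - 1) (q ^ (L - 1) - 1) := by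
    ext n
    constructor
    · rintro ⟨v, hv, rfl⟩
      have h1 := (layer_le_iff hq v t).1 hv
      exact ⟨by omega, F_lt hq hL v⟩
    · rintro ⟨h1, h2⟩
      obtain ⟨v, rfl⟩ := F_surj hq hL h2
      have hpos : 1 ≤ q ^ (L - 1 - t) := Nat.one_le_pow _ _ (by omega)
      exact ⟨v, (layer_le_iff hq v t).2 (by omega), rfl⟩
  have := Set.ncard_image_of_injective {v : ChainVert q L | v.1.1 ≤ t} (F_inj hq)
  rw [himg] at this
  rw [← this, ← Finset.coe_Ico, Set.ncard_coe_finset, Nat.card_Ico]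
  have hpos : 1 ≤ q ^ (L - 1 - t) := Nat.one_le_pow _ _ (by omega)
  have hle : q ^ (L - 1 - t) ≤ q ^ (L - 1) := Nat.pow_le_pow_right (by omega) (by omega)
  omega

lemma card_univ (hq : 2 ≤ q) (hL : 2 ≤ L) :
    Nat.card (ChainVert q L) = q ^ (L - 1) - 1 := by
  have h : (Set.univ : Set (ChainVert q L)) = {v : ChainVert q L | v.1.1 ≤ L - 1} := by
    ext v; simp [v.2.2.1]
  have := card_layer_le (q := q) (L := L) hq hL (L - 1)
  rw [← h, Set.ncard_univ] at this
  simpa using this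

/-- upper bound structure lemma -/
lemma indep_bound (hq : 2 ≤ q) (hL : 2 ≤ L) (S : Set (ChainVert q L))
    (hS : IsIndepSet' (chainGraph q L) S) :
    S = ∅ ∨ (∃ m, 2 * m < L ∧ S.ncard ≤ q ^ (L - 1) - q ^ (L - 1 - m)) ∨
      (∃ m, L ≤ 2 * m ∧ m ≤ L - 1 ∧ S.ncard ≤ 1 + (q ^ (L - 1) - q ^ m)) := by
  rcases S.eq_empty_or_nonempty with h | h
  · exact Or.inl h
  right
  obtain ⟨v, hvS, hmax⟩ := Set.Finite.exists_maximalFor (fun v : ChainVert q L => v.1.1) S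
    S.toFinite h
  set m := v.1.1 with hm
  have hmax' : ∀ u ∈ S, u.1.1 ≤ m := by
    intro u hu
    by_contra hc
    have : u.1.1 ≤ v.1.1 := hmax hu (by show v.1.1 ≤ u.1.1; omega)
    omega
  rcases lt_or_ge (2 * m) L with hcase | hcase
  · left
    refine ⟨m, hcase, ?_⟩
    calc S.ncard ≤ {u : ChainVert q L | u.1.1 ≤ m}.ncard :=
          Set.ncard_le_ncard (fun u hu => hmax' u hu) (Set.toFinite _)
      _ = q ^ (L - 1) - q ^ (L - 1 - m) := card_layer_le hq hL m
  · right
    refine ⟨m, hcase, v.2.2.1, ?_⟩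
    have hsub : S ⊆ insert v {u : ChainVert q L | u.1.1 ≤ L - 1 - m} := by
      intro u hu
      by_cases huv : u = v
      · exact Or.inl huv
      · right
        have hnadj := hS hu hvS huv
        simp only [chainGraph, ne_eq] at hnadj
        push_neg at hnadj
        have := hnadj huv
        simp only [Set.mem_setOf_eq]
        have hm1 := v.2.2.1
        omega
    calc S.ncard ≤ (insert v {u : ChainVert q L | u.1.1 ≤ L - 1 - m}).ncard :=
          Set.ncard_le_ncard hsub (Set.toFinite _)
      _ ≤ 1 + {u : ChainVert q L | u.1.1 ≤ L - 1 - m}.ncard := by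
          rw [Nat.add_comm]; exact Set.ncard_insert_le _ _
      _ = 1 + (q ^ (L - 1) - q ^ (L - 1 - (L - 1 - m))) := by rw [card_layer_le hq hL]
      _ = 1 + (q ^ (L - 1) - q ^ m) := by
          have hmm : L - 1 - (L - 1 - m) = m := by
            have := v.2.2.1; omega
          rw [hmm]

lemma compl_indep_of_cover {V : Type*} (G : SimpleGraph V) (c : Set V)
    (hc : IsVertexCover G c) : IsIndepSet' G cᶜ := by
  intro x hx y hy hxy hadj
  rcases hc hadj with h | h
  · exact hx h
  · exact hy h

lemma compl_cover_of_indep {V : Type*} (G : SimpleGraph V) (s : Set V)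
    (hs : IsIndepSet' G s) : IsVertexCover G sᶜ := by
  intro x y hadj
  by_contra hcon
  push_neg at hcon
  obtain ⟨hx, hy⟩ := hcon
  simp only [Set.mem_compl_iff, not_not] at hx hy
  exact hs hx hy (G.ne_of_adj hadj) hadj

end ChainAux


open ChainAux

/-- The independence number of `C(q,L)` is
`q^(2a−1) − q^a + 1` when `L = 2a` and `q^(2a) − q^a` when `L = 2a+1`;
consequently the minimum vertex-cover size is `q^a − 2`, resp. `q^a − 1`. -/
theorem chainGraph_indepNumber_vertexCover (q L a : ℕ) (hq : 2 ≤ q) (hL : 2 ≤ L) :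
    (L = 2 * a →
      IsGreatest {n | ∃ s : Set (ChainVert q L),
          IsIndepSet' (chainGraph q L) s ∧ s.ncard = n}
        (q ^ (2 * a - 1) - q ^ a + 1) ∧
      IsLeast {n | ∃ s : Set (ChainVert q L),
          IsVertexCover (chainGraph q L) s ∧ s.ncard = n}
        (q ^ a - 2)) ∧
    (L = 2 * a + 1 →
      IsGreatest {n | ∃ s : Set (ChainVert q L),
          IsIndepSet' (chainGraph q L) s ∧ s.ncard = n}
        (q ^ (2 * a) - q ^ a) ∧
      IsLeast {n | ∃ s : Set (ChainVert q L),
          IsVertexCover (chainGraph q L) s ∧ s.ncard = n}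
        (q ^ a - 1)) := by
  have hcard := card_univ (q := q) (L := L) hq hL
  constructor
  · -- even case  L = 2a
    intro hLa
    have ha : 1 ≤ a := by omega
    -- witness
    have hv0 : 1 ≤ a ∧ a ≤ L - 1 ∧ 0 < (q - 1) * q ^ (L - a - 1) :=
      ⟨ha, by omega, Nat.mul_pos (by omega) (Nat.pow_pos (by omega))⟩
    set v₀ : ChainVert q L := ⟨(a, 0), hv0⟩ with hv0def
    set W : Set (ChainVert q L) := insert v₀ {v : ChainVert q L | v.1.1 ≤ a - 1} with hW
    have hWindep : IsIndepSet' (chainGraph q L) W := by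
      intro x hx y hy hxy hadj
      simp only [chainGraph] at hadj
      have hsum := hadj.2
      rcases hx with hx | hx <;> rcases hy with hy | hy
      · exact hxy (hx.trans hy.symm)
      · simp only [Set.mem_setOf_eq] at hy
        rw [hx] at hsum; simp only [hv0def] at hsum; omega
      · simp only [Set.mem_setOf_eq] at hx
        rw [hy] at hsum; simp only [hv0def] at hsum; omega
      · simp only [Set.mem_setOf_eq] at hx hy; omega
    have hWcard : W.ncard = q ^ (2 * a - 1) - q ^ a + 1 := by
      have hnotmem : v₀ ∉ {v : ChainVert q L | v.1.1 ≤ a - 1} := by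
        simp only [Set.mem_setOf_eq, hv0def]; omega
      rw [hW, Set.ncard_insert_of_notMem hnotmem (Set.toFinite _),
        card_layer_le hq hL]
      have e1 : L - 1 = 2 * a - 1 := by omega
      have e2 : 2 * a - 1 - (a - 1) = a := by omega
      rw [e1, e2]
    have hGreat : IsGreatest {n | ∃ s : Set (ChainVert q L),
        IsIndepSet' (chainGraph q L) s ∧ s.ncard = n} (q ^ (2 * a - 1) - q ^ a + 1) := by
      constructor
      · exact ⟨W, hWindep, hWcard⟩
      · rintro n ⟨s, hs, rfl⟩
        rcases indep_bound hq hL s hs with h | ⟨m, h2m, hb⟩ | ⟨m, h2m, hmL, hb⟩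
        · subst h; simp
        · have e1 : L - 1 = 2 * a - 1 := by omega
          rw [e1] at hb
          have p1 : q ^ a ≤ q ^ (2 * a - 1 - m) :=
            Nat.pow_le_pow_right (by omega) (by omega)
          omega
        · have e1 : L - 1 = 2 * a - 1 := by omega
          rw [e1] at hb
          have p1 : q ^ a ≤ q ^ m := Nat.pow_le_pow_right (by omega) (by omega)
          have p2 : q ^ m ≤ q ^ (2 * a - 1) :=
            Nat.pow_le_pow_right (by omega) (by omega)
          omega
    refine ⟨hGreat, ?_⟩
    -- vertex cover, even case
    have hq2 : 2 ≤ q ^ a :=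
      le_trans (by simpa using hq) (Nat.pow_le_pow_right (by omega) ha)
    have hqa : q ^ a ≤ q ^ (2 * a - 1) := Nat.pow_le_pow_right (by omega) (by omega)
    have e1 : L - 1 = 2 * a - 1 := by omega
    rw [e1] at hcard
    constructor
    · refine ⟨Wᶜ, compl_cover_of_indep _ _ hWindep, ?_⟩
      have hsumW := Set.ncard_add_ncard_compl W (Set.toFinite _) (Set.toFinite _)
      rw [hcard, hWcard] at hsumW
      omega
    · rintro n ⟨c, hc, rfl⟩
      have hind := compl_indep_of_cover _ _ hc
      have hle := hGreat.2 ⟨cᶜ, hind, rfl⟩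
      have hsumc := Set.ncard_add_ncard_compl c (Set.toFinite _) (Set.toFinite _)
      rw [hcard] at hsumc
      omega
  · -- odd case L = 2a + 1
    intro hLa
    have ha : 1 ≤ a := by omega
    set W : Set (ChainVert q L) := {v : ChainVert q L | v.1.1 ≤ a} with hW
    have hWindep : IsIndepSet' (chainGraph q L) W := by
      intro x hx y hy hxy hadj
      simp only [chainGraph] at hadj
      have hsum := hadj.2
      simp only [hW, Set.mem_setOf_eq] at hx hy
      omega
    have hWcard : W.ncard = q ^ (2 * a) - q ^ a := by
      rw [hW, card_layer_le hq hL]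
      have e1 : L - 1 = 2 * a := by omega
      have e2 : 2 * a - a = a := by omega
      rw [e1, e2]
    have hGreat : IsGreatest {n | ∃ s : Set (ChainVert q L),
        IsIndepSet' (chainGraph q L) s ∧ s.ncard = n} (q ^ (2 * a) - q ^ a) := by
      constructor
      · exact ⟨W, hWindep, hWcard⟩
      · rintro n ⟨s, hs, rfl⟩
        rcases indep_bound hq hL s hs with h | ⟨m, h2m, hb⟩ | ⟨m, h2m, hmL, hb⟩
        · subst h; simp
        · have e1 : L - 1 = 2 * a := by omega
          rw [e1] at hb
          have p1 : q ^ a ≤ q ^ (2 * a - m) :=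
            Nat.pow_le_pow_right (by omega) (by omega)
          omega
        · have e1 : L - 1 = 2 * a := by omega
          rw [e1] at hb
          have p1 : q ^ (a + 1) ≤ q ^ m :=
            Nat.pow_le_pow_right (by omega) (by omega)
          have p2 : q ^ m ≤ q ^ (2 * a) :=
            Nat.pow_le_pow_right (by omega) (by omega)
          have p3 : 2 * q ^ a ≤ q ^ (a + 1) := by
            rw [pow_succ]
            calc 2 * q ^ a = q ^ a * 2 := by ring
              _ ≤ q ^ a * q := Nat.mul_le_mul_left _ hq
          have p4 : 1 ≤ q ^ a := Nat.one_le_pow _ _ (by omega)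
          omega
    refine ⟨hGreat, ?_⟩
    have hq2 : 2 ≤ q ^ a :=
      le_trans (by simpa using hq) (Nat.pow_le_pow_right (by omega) ha)
    have hqa : q ^ a ≤ q ^ (2 * a) := Nat.pow_le_pow_right (by omega) (by omega)
    have e1 : L - 1 = 2 * a := by omega
    rw [e1] at hcard
    constructor
    · refine ⟨Wᶜ, compl_cover_of_indep _ _ hWindep, ?_⟩
      have hsumW := Set.ncard_add_ncard_compl W (Set.toFinite _) (Set.toFinite _)
      rw [hcard, hWcard] at hsumW
      omega
    · rintro n ⟨c, hc, rfl⟩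
      have hind := compl_indep_of_cover _ _ hc
      have hle := hGreat.2 ⟨cᶜ, hind, rfl⟩
      have hsumc := Set.ncard_add_ncard_compl c (Set.toFinite _) (Set.toFinite _)
      rw [hcard] at hsumc
      omega
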